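/- Let n be a sufficiently large power of two. Every SA refutation of BinPHP^{n+1}_n (every infeasible finite subset of its SA lifted system) contains at least (6/5)^{n/16} − 1 distinct terms. -/

import Mathlib

/-- A *term*: a partial assignment of Boolean values to variables (a conjunction of
literals in which no variable occurs both positively and negatively).
The empty term `⊤` is `fun _ => none`. -/
def SATerm (V : Type) := V → Option Bool

/-- Extend a term by the literal `x^b`. -/
def SATerm.extend {V : Type} [DecidableEq V] (D : SATerm V) (x : V) (b : Bool) :
    SATerm V := fun y => if y = x then some b else D y

/-- The value `v(D ∧ x^b)`, with the convention that it is `0` whenever `D` contains the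
literal complementary to `x^b`. -/
def evalLit {V : Type} [DecidableEq V] (v : SATerm V → ℝ) (D : SATerm V)
    (x : V) (b : Bool) : ℝ :=
  if D x = some (!b) then 0 else v (D.extend x b)

/-- The set of variables occurring in a term. -/
def SATerm.vars {V : Type} (D : SATerm V) : Set V := {x | D x ≠ none}

/-- The number of literals of a term. -/
noncomputable def SATerm.size {V : Type} (D : SATerm V) : ℕ := D.vars.ncard
/-- A constraint of the Sherali--Adams lifted system of a CNF (clauses are lists of
literals; a literal is a pair of a variable and a polarity). -/
inductive SACon (V : Type) where
  | top : SACon V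
  | negation (D : SATerm V) (x : V) : SACon V
  | bound (D : SATerm V) (x : V) (b : Bool) : SACon V
  | clause (D : SATerm V) (C : List (V × Bool)) : SACon V

/-- What it means for `v` to satisfy a constraint of the SA lifted system of the CNF `F`:
(i) `v(⊤) = 1`; (ii) `v(D∧x) + v(D∧¬x) = v(D)` for `x` not occurring in `D`;
(iii) `0 ≤ v(D∧l) ≤ v(D)`; (iv) `v(D∧l₁) + … + v(D∧lₜ) ≥ v(D)` for every clause
`l₁∨…∨lₜ` of `F`. -/
def SACon.holds {V : Type} [DecidableEq V] (F : Set (List (V × Bool)))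
    (v : SATerm V → ℝ) : SACon V → Prop
  | .top => v (fun _ => none) = 1
  | .negation D x => D x = none →
      v (D.extend x true) + v (D.extend x false) = v D
  | .bound D x b => 0 ≤ evalLit v D x b ∧ evalLit v D x b ≤ v D
  | .clause D C => C ∈ F → v D ≤ (C.map fun l => evalLit v D l.1 l.2).sum

/-- The terms occurring in a constraint. -/
def SACon.termsOf {V : Type} [DecidableEq V] : SACon V → Set (SATerm V)
  | .top => {fun _ => none}
  | .negation D x => {D, D.extend x true, D.extend x false}
  | .bound D x b => {D, D.extend x b}
  | .clause D C => insert D {T | ∃ l ∈ C, T = D.extend l.1 l.2}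
/-- The big disjunction `⋁_{k=1}^{r} P_{i,k}^{1−a_k}` saying that pigeon `i` does *not*
go to hole `a` (where `a_1…a_r` is the binary representation of `a`). -/
def holeClause (m r : ℕ) (i : Fin m) (a : ℕ) : List ((Fin m × Fin r) × Bool) :=
  (List.finRange r).map fun k => ((i, k), !(a.testBit k.val))

/-- The binary pigeonhole principle `BinPHP^m_n` (with `r = log₂ n` address bits):
for every hole `a ∈ [n]` and all distinct pigeons `i ≠ i'`, the clause
`⋁_k P_{i,k}^{1−a_k} ∨ ⋁_k P_{i',k}^{1−a_k}`. -/
def BinPHP (m n r : ℕ) : Set (List ((Fin m × Fin r) × Bool)) :=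
  {C | ∃ i i' : Fin m, ∃ a : Fin n,
      i ≠ i' ∧ C = holeClause m r i a.val ++ holeClause m r i' a.val}

/-- The set of pigeons mentioned by a term. -/
def mentions {m r : ℕ} (T : SATerm (Fin m × Fin r)) : Set (Fin m) :=
  {i | ∃ k : Fin r, T (i, k) ≠ none}

namespace BPHP

open Finset

lemma extend_apply_ne {V : Type} [DecidableEq V] (D : SATerm V) (x y : V) (b : Bool)
    (h : y ≠ x) : D.extend x b y = D y := by
  simp [SATerm.extend, h]

lemma extend_apply_self {V : Type} [DecidableEq V] (D : SATerm V) (x : V) (b : Bool) :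
    D.extend x b x = some b := by
  simp [SATerm.extend]

lemma extend_eq_self {V : Type} [DecidableEq V] {D : SATerm V} {x : V} {b : Bool}
    (h : D x = some b) : D.extend x b = D := by
  funext y
  by_cases hy : y = x
  · subst hy; simp [SATerm.extend, h]
  · simp [SATerm.extend, hy]

structure Match (m n : ℕ) where
  matched : Fin m → Bool
  hole : Fin m → Fin n
  inj : ∀ p p', matched p = true → matched p' = true → hole p = hole p' → p = p'

variable {m n r : ℕ}

/-- free holes -/
def Free (E : Match m n) : Finset (Fin n) :=
  univ.filter (fun h => ∀ p, E.matched p = true → E.hole p ≠ h)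

def Fc (E : Match m n) : ℕ := (Free E).card

/-- consistency of a term with the matching -/
def consE (E : Match m n) (D : SATerm (Fin m × Fin r)) : Prop :=
  ∀ p (k : Fin r) c, E.matched p = true → D (p, k) = some c →
    Nat.testBit (E.hole p : ℕ) k.val = c

/-- unmatched mentioned pigeons -/
def UM (E : Match m n) (D : SATerm (Fin m × Fin r)) : Finset (Fin m) :=
  univ.filter (fun p => E.matched p = false ∧ ∃ k : Fin r, D (p, k) ≠ none)

/-- placements -/
def IsPl (E : Match m n) (Q : Finset (Fin m)) (D : SATerm (Fin m × Fin r))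
    (τ : Fin m → Option (Fin n)) : Prop :=
  (∀ p, (τ p).isSome ↔ p ∈ Q) ∧
  (∀ p p', p ≠ p' → τ p ≠ none → τ p ≠ τ p') ∧
  (∀ p h, τ p = some h → h ∈ Free E) ∧
  (∀ p (k : Fin r) c h, E.matched p = false → D (p, k) = some c → τ p = some h →
    Nat.testBit (h : ℕ) k.val = c)

instance (E : Match m n) (Q : Finset (Fin m)) (D : SATerm (Fin m × Fin r))
    (τ : Fin m → Option (Fin n)) : Decidable (IsPl E Q D τ) := by
  unfold IsPl; infer_instance

noncomputable def Pl (E : Match m n) (Q : Finset (Fin m)) (D : SATerm (Fin m × Fin r)) :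
    Finset (Fin m → Option (Fin n)) :=
  univ.filter (IsPl E Q D)

noncomputable def Np (E : Match m n) (Q : Finset (Fin m)) (D : SATerm (Fin m × Fin r)) : ℕ :=
  (Pl E Q D).card

lemma mem_Pl {E : Match m n} {Q : Finset (Fin m)} {D : SATerm (Fin m × Fin r)}
    {τ : Fin m → Option (Fin n)} :
    τ ∈ Pl E Q D ↔ IsPl E Q D τ := by simp [Pl]


lemma extend_pair_ne {D : SATerm (Fin m × Fin r)} {p : Fin m} {k : Fin r} {b : Bool}
    {p' : Fin m} {k' : Fin r} (h : (p', k') ≠ (p, k)) :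
    D.extend (p, k) b (p', k') = D (p', k') := extend_apply_ne D _ _ b h

lemma isPl_extend_iff (E : Match m n) (Q : Finset (Fin m)) (D : SATerm (Fin m × Fin r))
    (p : Fin m) (k : Fin r) (b : Bool) (hD : D (p, k) = none)
    (τ : Fin m → Option (Fin n)) :
    IsPl E Q (D.extend (p, k) b) τ ↔ IsPl E Q D τ ∧
      (E.matched p = false → ∀ h, τ p = some h → Nat.testBit (h : ℕ) k.val = b) := by
  constructor
  · rintro ⟨h1, h2, h3, h4⟩
    refine ⟨⟨h1, h2, h3, ?_⟩, ?_⟩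
    · intro p' k' c h hm hDc hτ
      refine h4 p' k' c h hm ?_ hτ
      have hne : (p', k') ≠ (p, k) := by
        rintro h'; rw [h'] at hDc; rw [hD] at hDc; cases hDc
      rw [extend_pair_ne hne]; exact hDc
    · intro hm h hτ
      exact h4 p k b h hm (extend_apply_self D _ b) hτ
  · rintro ⟨⟨h1, h2, h3, h4⟩, h5⟩
    refine ⟨h1, h2, h3, ?_⟩
    intro p' k' c h hm hDc hτ
    by_cases hne : (p', k') = (p, k)
    · obtain ⟨rfl, rfl⟩ : p' = p ∧ k' = k :=
        ⟨congrArg Prod.fst hne, congrArg Prod.snd hne⟩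
      rw [extend_apply_self D _ b] at hDc
      cases hDc
      exact h5 hm h hτ
    · rw [extend_pair_ne hne] at hDc
      exact h4 p' k' c h hm hDc hτ

lemma isPl_extend_matched_iff (E : Match m n) (Q : Finset (Fin m))
    (D : SATerm (Fin m × Fin r)) (p : Fin m) (k : Fin r) (b : Bool)
    (hm : E.matched p = true) (τ : Fin m → Option (Fin n)) :
    IsPl E Q (D.extend (p, k) b) τ ↔ IsPl E Q D τ := by
  constructor
  · rintro ⟨h1, h2, h3, h4⟩
    refine ⟨h1, h2, h3, ?_⟩
    intro p' k' c h hm' hDc hτ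
    have hne : (p', k') ≠ (p, k) := by
      rintro h'
      have : p' = p := congrArg Prod.fst h'
      rw [this, hm] at hm'; exact Bool.noConfusion hm'
    exact h4 p' k' c h hm' (by rw [extend_pair_ne hne]; exact hDc) hτ
  · rintro ⟨h1, h2, h3, h4⟩
    refine ⟨h1, h2, h3, ?_⟩
    intro p' k' c h hm' hDc hτ
    have hne : (p', k') ≠ (p, k) := by
      rintro h'
      have : p' = p := congrArg Prod.fst h'
      rw [this, hm] at hm'; exact Bool.noConfusion hm'
    rw [extend_pair_ne hne] at hDc
    exact h4 p' k' c h hm' hDc hτ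

lemma Np_extend_matched (E : Match m n) (Q : Finset (Fin m)) (D : SATerm (Fin m × Fin r))
    (p : Fin m) (k : Fin r) (b : Bool) (hm : E.matched p = true) :
    Np E Q (D.extend (p, k) b) = Np E Q D := by
  unfold Np Pl
  congr 1
  apply Finset.filter_congr
  intro τ _
  simp only [isPl_extend_matched_iff E Q D p k b hm]

lemma Pl_extend_subset (E : Match m n) (Q : Finset (Fin m)) (D : SATerm (Fin m × Fin r))
    (x : Fin m × Fin r) (b : Bool) (hD : D x = none) :
    Pl E Q (D.extend x b) ⊆ Pl E Q D := by
  intro τ hτ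
  rw [mem_Pl] at hτ ⊢
  obtain ⟨p, k⟩ := x
  rw [isPl_extend_iff E Q D p k b hD] at hτ
  exact hτ.1

lemma Np_extend_le (E : Match m n) (Q : Finset (Fin m)) (D : SATerm (Fin m × Fin r))
    (x : Fin m × Fin r) (b : Bool) (hD : D x = none) :
    Np E Q (D.extend x b) ≤ Np E Q D :=
  Finset.card_le_card (Pl_extend_subset E Q D x b hD)

/-- the bit-split identity -/
lemma Np_extend_split (E : Match m n) (Q : Finset (Fin m)) (D : SATerm (Fin m × Fin r))
    (p : Fin m) (k : Fin r) (hm : E.matched p = false) (hp : p ∈ Q)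
    (hD : D (p, k) = none) :
    Np E Q (D.extend (p, k) true) + Np E Q (D.extend (p, k) false) = Np E Q D := by
  classical
  have hdisj : Disjoint (Pl E Q (D.extend (p, k) true)) (Pl E Q (D.extend (p, k) false)) := by
    rw [Finset.disjoint_left]
    intro τ h1 h2
    rw [mem_Pl, isPl_extend_iff E Q D p k _ hD] at h1 h2
    have hsome : (τ p).isSome := (h1.1.1 p).mpr hp
    obtain ⟨h0, hh0⟩ := Option.isSome_iff_exists.mp hsome
    have e1 := h1.2 hm h0 hh0
    have e2 := h2.2 hm h0 hh0
    rw [e1] at e2; exact Bool.noConfusion e2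
  have hunion : Pl E Q (D.extend (p, k) true) ∪ Pl E Q (D.extend (p, k) false) = Pl E Q D := by
    apply Finset.Subset.antisymm
    · apply Finset.union_subset <;> exact Pl_extend_subset E Q D (p, k) _ hD
    · intro τ hτ
      rw [mem_Pl] at hτ
      have hsome : (τ p).isSome := (hτ.1 p).mpr hp
      obtain ⟨h0, hh0⟩ := Option.isSome_iff_exists.mp hsome
      rcases hb : Nat.testBit (h0 : ℕ) k.val with _ | _
      · apply Finset.mem_union_right
        rw [mem_Pl, isPl_extend_iff E Q D p k _ hD]
        refine ⟨hτ, fun _ h hsh => ?_⟩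
        rw [hh0] at hsh; cases hsh; exact hb
      · apply Finset.mem_union_left
        rw [mem_Pl, isPl_extend_iff E Q D p k _ hD]
        refine ⟨hτ, fun _ h hsh => ?_⟩
        rw [hh0] at hsh; cases hsh; exact hb
  unfold Np
  rw [← hunion, Finset.card_union_of_disjoint hdisj]

noncomputable def used (τ : Fin m → Option (Fin n)) : Finset (Fin n) :=
  univ.filter (fun h => ∃ p', τ p' = some h)

lemma card_used (E : Match m n) (Q : Finset (Fin m)) (D : SATerm (Fin m × Fin r))
    (τ : Fin m → Option (Fin n)) (hτ : IsPl E Q D τ) : (used τ).card = Q.card := by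
  classical
  obtain ⟨h1, h2, h3, h4⟩ := hτ
  symm
  apply Finset.card_bij (fun p _ => ((τ p).get (by
      exact (h1 p).mpr (by assumption)) : Fin n))
  · intro p hp
    simp only [used, Finset.mem_filter, Finset.mem_univ, true_and]
    exact ⟨p, Option.eq_some_of_isSome _⟩
  · intro p hp p' hp' heq
    by_contra hne
    have hsome : (τ p).isSome := (h1 p).mpr hp
    have hsome' : (τ p').isSome := (h1 p').mpr hp'
    apply h2 p p' hne (by
      intro hn; rw [hn] at hsome; exact Bool.noConfusion hsome)
    rw [Option.eq_some_of_isSome hsome, Option.eq_some_of_isSome hsome', heq]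
  · intro h hh
    simp only [used, Finset.mem_filter, Finset.mem_univ, true_and] at hh
    obtain ⟨p', hp'⟩ := hh
    have hsome : (τ p').isSome := by rw [hp']; rfl
    refine ⟨p', (h1 p').mp hsome, ?_⟩
    simp [hp']

lemma used_subset_free (E : Match m n) (Q : Finset (Fin m)) (D : SATerm (Fin m × Fin r))
    (τ : Fin m → Option (Fin n)) (hτ : IsPl E Q D τ) : used τ ⊆ Free E := by
  intro h hh
  simp only [used, Finset.mem_filter, Finset.mem_univ, true_and] at hh
  obtain ⟨p', hp'⟩ := hh
  exact hτ.2.2.1 p' h hp'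

/-- the fresh-pigeon extension identity -/
lemma Np_insert (E : Match m n) (Q : Finset (Fin m)) (D : SATerm (Fin m × Fin r))
    (p : Fin m) (hm : E.matched p = false) (hp : p ∉ Q)
    (hfresh : ∀ k : Fin r, D (p, k) = none) :
    Np E (insert p Q) D = Np E Q D * (Fc E - Q.card) := by
  classical
  have hmap : ∀ τ' ∈ Pl E (insert p Q) D, Function.update τ' p none ∈ Pl E Q D := by
    intro τ' hτ'
    rw [mem_Pl] at hτ' ⊢
    obtain ⟨h1, h2, h3, h4⟩ := hτ'
    refine ⟨?_, ?_, ?_, ?_⟩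
    · intro y
      by_cases hy : y = p
      · subst hy; simp [Function.update_self, hp]
      · rw [Function.update_of_ne hy]
        rw [h1 y, Finset.mem_insert]
        simp [hy]
    · intro y y' hne hnn
      by_cases hy : y = p
      · subst hy; simp [Function.update_self] at hnn
      · rw [Function.update_of_ne hy] at hnn ⊢
        by_cases hy' : y' = p
        · subst hy'; rw [Function.update_self]
          intro heq; exact hnn heq
        · rw [Function.update_of_ne hy']
          exact h2 y y' hne hnn
    · intro y h hy
      by_cases hyp : y = p
      · subst hyp; rw [Function.update_self] at hy; cases hy
      · rw [Function.update_of_ne hyp] at hy; exact h3 y h hy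
    · intro y k c h hmy hDc hy
      by_cases hyp : y = p
      · subst hyp; rw [Function.update_self] at hy; cases hy
      · rw [Function.update_of_ne hyp] at hy; exact h4 y k c h hmy hDc hy
  have key : ∀ τ ∈ Pl E Q D,
      ((Pl E (insert p Q) D).filter (fun τ' => Function.update τ' p none = τ)).card
        = Fc E - Q.card := by
    intro τ hτmem
    have hτ := mem_Pl.mp hτmem
    have hfib : (Pl E (insert p Q) D).filter (fun τ' => Function.update τ' p none = τ)
        = (Free E \ used τ).image (fun h => Function.update τ p (some h)) := by
      ext τ'
      simp only [Finset.mem_filter, Finset.mem_image, Finset.mem_sdiff]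
      constructor
      · rintro ⟨hτ'mem, hupd⟩
        have hτ' := mem_Pl.mp hτ'mem
        obtain ⟨h1, h2, h3, h4⟩ := hτ'
        have hsome : (τ' p).isSome := (h1 p).mpr (Finset.mem_insert_self p Q)
        obtain ⟨h0, hh0⟩ := Option.isSome_iff_exists.mp hsome
        have hrest : ∀ y, y ≠ p → τ y = τ' y := by
          intro y hy
          rw [← hupd, Function.update_of_ne hy]
        refine ⟨h0, ⟨⟨h3 p h0 hh0, ?_⟩, ?_⟩⟩
        · intro hu
          simp only [used, Finset.mem_filter, Finset.mem_univ, true_and] at hu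
          obtain ⟨p₂, hp₂⟩ := hu
          have hp₂p : p₂ ≠ p := by
            intro he; subst he
            have : τ p₂ = none := by rw [← hupd, Function.update_self]
            rw [this] at hp₂; cases hp₂
          have : τ' p₂ = some h0 := by rw [← hrest p₂ hp₂p]; exact hp₂
          exact h2 p₂ p hp₂p (by rw [this]; exact fun h => by cases h)
            (by rw [this, hh0])
        · funext y
          by_cases hy : y = p
          · subst hy; rw [Function.update_self, hh0]
          · rw [Function.update_of_ne hy]; exact hrest y hy
      · rintro ⟨h0, ⟨⟨hfree, hnotused⟩, rfl⟩⟩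
        obtain ⟨h1, h2, h3, h4⟩ := hτ
        have hτp : τ p = none := by
          rcases ho : τ p with _ | hv
          · rfl
          · exact absurd ((h1 p).mp (by rw [ho]; rfl)) hp
        constructor
        · rw [mem_Pl]
          refine ⟨?_, ?_, ?_, ?_⟩
          · intro y
            by_cases hy : y = p
            · subst hy; simp [Function.update_self]
            · rw [Function.update_of_ne hy, h1 y, Finset.mem_insert]
              simp [hy]
          · intro y y' hne hnn
            by_cases hy : y = p
            · have he : Function.update τ p (some h0) y = some h0 := by
                rw [hy, Function.update_self]
              rw [he]
              by_cases hy' : y' = p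
              · exact absurd (hy.trans hy'.symm) hne
              · rw [Function.update_of_ne hy']
                intro heq
                apply hnotused
                simp only [used, Finset.mem_filter, Finset.mem_univ, true_and]
                exact ⟨y', heq.symm⟩
            · rw [Function.update_of_ne hy] at hnn ⊢
              by_cases hy' : y' = p
              · have he : Function.update τ p (some h0) y' = some h0 := by
                  rw [hy', Function.update_self]
                rw [he]
                intro heq
                apply hnotused
                simp only [used, Finset.mem_filter, Finset.mem_univ, true_and]
                exact ⟨y, heq⟩
              · rw [Function.update_of_ne hy']
                exact h2 y y' hne hnn
          · intro y h hy
            by_cases hyp : y = p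
            · subst hyp; rw [Function.update_self] at hy; cases hy; exact hfree
            · rw [Function.update_of_ne hyp] at hy; exact h3 y h hy
          · intro y k c h hmy hDc hy
            by_cases hyp : y = p
            · subst hyp; rw [hfresh k] at hDc; cases hDc
            · rw [Function.update_of_ne hyp] at hy; exact h4 y k c h hmy hDc hy
        · funext y
          by_cases hy : y = p
          · subst hy; rw [Function.update_self, hτp]
          · rw [Function.update_of_ne hy, Function.update_of_ne hy]
    rw [hfib, Finset.card_image_of_injective _ (by
      intro a b hab
      have h5 := congrFun hab p
      simp only [Function.update_self, Option.some.injEq] at h5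
      exact h5),
      Finset.card_sdiff_of_subset (used_subset_free E Q D τ hτ), card_used E Q D τ hτ]
    rfl
  unfold Np
  rw [Finset.card_eq_sum_card_fiberwise hmap]
  rw [Finset.sum_congr rfl key, Finset.sum_const, smul_eq_mul]

lemma consE_extend_unmatched (E : Match m n) (D : SATerm (Fin m × Fin r))
    (p : Fin m) (k : Fin r) (b : Bool) (hm : E.matched p = false) :
    consE E (D.extend (p, k) b) ↔ consE E D := by
  constructor
  · intro hc p' k' c hm' hDc
    refine hc p' k' c hm' ?_
    have hne : (p', k') ≠ (p, k) := by
      rintro h'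
      have : p' = p := congrArg Prod.fst h'
      rw [this, hm] at hm'; exact Bool.noConfusion hm'
    rw [extend_pair_ne hne]; exact hDc
  · intro hc p' k' c hm' hDc
    have hne : (p', k') ≠ (p, k) := by
      rintro h'
      have : p' = p := congrArg Prod.fst h'
      rw [this, hm] at hm'; exact Bool.noConfusion hm'
    rw [extend_pair_ne hne] at hDc
    exact hc p' k' c hm' hDc

lemma consE_extend_matched_iff (E : Match m n) (D : SATerm (Fin m × Fin r))
    (p : Fin m) (k : Fin r) (b : Bool) (hm : E.matched p = true) (hD : D (p, k) = none) :
    consE E (D.extend (p, k) b) ↔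
      (consE E D ∧ Nat.testBit (E.hole p : ℕ) k.val = b) := by
  constructor
  · intro hc
    constructor
    · intro p' k' c hm' hDc
      refine hc p' k' c hm' ?_
      have hne : (p', k') ≠ (p, k) := by
        rintro h'; rw [h'] at hDc; rw [hD] at hDc; cases hDc
      rw [extend_pair_ne hne]; exact hDc
    · exact hc p k b hm (extend_apply_self D _ b)
  · rintro ⟨hc, hbit⟩
    intro p' k' c hm' hDc
    by_cases hne : (p', k') = (p, k)
    · obtain ⟨rfl, rfl⟩ : p' = p ∧ k' = k :=
        ⟨congrArg Prod.fst hne, congrArg Prod.snd hne⟩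
      rw [extend_apply_self D _ b] at hDc
      cases hDc
      exact hbit
    · rw [extend_pair_ne hne] at hDc
      exact hc p' k' c hm' hDc

lemma UM_extend_unmatched (E : Match m n) (D : SATerm (Fin m × Fin r))
    (p : Fin m) (k : Fin r) (b : Bool) (hm : E.matched p = false) :
    UM E (D.extend (p, k) b) = insert p (UM E D) := by
  ext y
  simp only [UM, Finset.mem_filter, Finset.mem_univ, true_and, Finset.mem_insert]
  by_cases hy : y = p
  · subst hy
    constructor
    · intro _; exact Or.inl rfl
    · intro _
      exact ⟨hm, ⟨k, by rw [extend_apply_self D _ b]; exact fun h => by cases h⟩⟩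
  · constructor
    · rintro ⟨h1, ⟨k', hk'⟩⟩
      refine Or.inr ⟨h1, ⟨k', ?_⟩⟩
      rwa [extend_pair_ne (by rintro h'; exact hy (congrArg Prod.fst h'))] at hk'
    · rintro (h | ⟨h1, ⟨k', hk'⟩⟩)
      · exact absurd h hy
      · refine ⟨h1, ⟨k', ?_⟩⟩
        rwa [extend_pair_ne (by rintro h'; exact hy (congrArg Prod.fst h'))]

lemma UM_extend_matched (E : Match m n) (D : SATerm (Fin m × Fin r))
    (p : Fin m) (k : Fin r) (b : Bool) (hm : E.matched p = true) :
    UM E (D.extend (p, k) b) = UM E D := by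
  ext y
  simp only [UM, Finset.mem_filter, Finset.mem_univ, true_and]
  by_cases hy : y = p
  · subst hy; rw [hm]; simp
  · constructor
    · rintro ⟨h1, ⟨k', hk'⟩⟩
      refine ⟨h1, ⟨k', ?_⟩⟩
      rwa [extend_pair_ne (by rintro h'; exact hy (congrArg Prod.fst h'))] at hk'
    · rintro ⟨h1, ⟨k', hk'⟩⟩
      refine ⟨h1, ⟨k', ?_⟩⟩
      rwa [extend_pair_ne (by rintro h'; exact hy (congrArg Prod.fst h'))]

lemma mem_UM_of_unmatched_some {E : Match m n} {D : SATerm (Fin m × Fin r)}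
    {p : Fin m} {k : Fin r} {c : Bool} (hm : E.matched p = false)
    (h : D (p, k) = some c) : p ∈ UM E D := by
  simp only [UM, Finset.mem_filter, Finset.mem_univ, true_and]
  exact ⟨hm, ⟨k, by rw [h]; exact fun h' => by cases h'⟩⟩

lemma not_mem_UM_fresh {E : Match m n} {D : SATerm (Fin m × Fin r)} {p : Fin m}
    (hm : E.matched p = false) (hp : p ∉ UM E D) (k : Fin r) : D (p, k) = none := by
  by_contra h
  rcases ho : D (p, k) with _ | c
  · exact h ho
  · exact hp (mem_UM_of_unmatched_some hm ho)

lemma UM_unmatched (E : Match m n) (D : SATerm (Fin m × Fin r)) :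
    ∀ p ∈ UM E D, E.matched p = false := by
  intro p hp
  simp only [UM, Finset.mem_filter] at hp
  exact hp.2.1

instance (E : Match m n) (D : SATerm (Fin m × Fin r)) : Decidable (consE E D) := by
  unfold consE; infer_instance

/-- the valuation -/
noncomputable def val (E : Match m n) (r : ℕ) (D : SATerm (Fin m × Fin r)) : ℝ :=
  if consE E D then
    (Np E (UM E D) D : ℝ) / ((Fc E).descFactorial (UM E D).card : ℝ)
  else 0

lemma val_nonneg (E : Match m n) (r : ℕ) (D : SATerm (Fin m × Fin r)) :
    0 ≤ val E r D := by
  unfold val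
  split
  · positivity
  · exact le_rfl

/-- the lifting lemma: the valuation can be computed with any larger placement domain -/
lemma Np_div_eq (E : Match m n) (D : SATerm (Fin m × Fin r)) (Q : Finset (Fin m))
    (hsub : UM E D ⊆ Q) (hun : ∀ p ∈ Q, E.matched p = false) (hcard : Q.card ≤ Fc E) :
    (Np E Q D : ℝ) / ((Fc E).descFactorial Q.card : ℝ)
      = (Np E (UM E D) D : ℝ) / ((Fc E).descFactorial (UM E D).card : ℝ) := by
  classical
  generalize hd : Q.card - (UM E D).card = d
  induction d generalizing Q with
  | zero =>
    have hcards : Q.card ≤ (UM E D).card := by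
      have := Finset.card_le_card hsub
      omega
    have : Q = UM E D := (Finset.eq_of_subset_of_card_le hsub hcards).symm
    rw [this]
  | succ d ih =>
    have hne : (Q \ UM E D).Nonempty := by
      rw [Finset.sdiff_nonempty]
      intro hsub'
      have := Finset.card_le_card hsub'
      omega
    obtain ⟨p, hp⟩ := hne
    rw [Finset.mem_sdiff] at hp
    obtain ⟨hpQ, hpUM⟩ := hp
    set Q' := Q.erase p with hQ'
    have hpQ' : p ∉ Q' := Finset.notMem_erase p Q
    have hins : Q = insert p Q' := (Finset.insert_erase hpQ).symm
    have hcardQ : Q'.card + 1 = Q.card := Finset.card_erase_add_one hpQ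
    have hmP : E.matched p = false := hun p hpQ
    have hN : Np E Q D = Np E Q' D * (Fc E - Q'.card) := by
      rw [hins]
      exact Np_insert E Q' D p hmP hpQ' (not_mem_UM_fresh hmP hpUM)
    have hdF : (Fc E).descFactorial Q.card
        = (Fc E - Q'.card) * (Fc E).descFactorial Q'.card := by
      rw [← hcardQ]
      exact Nat.descFactorial_succ _ _
    have hsub' : UM E D ⊆ Q' := by
      intro x hx
      rw [hQ', Finset.mem_erase]
      exact ⟨fun h => hpUM (h ▸ hx), hsub hx⟩
    have hun' : ∀ q ∈ Q', E.matched q = false := fun q hq => hun q (Finset.erase_subset p Q hq)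
    have hcard' : Q'.card ≤ Fc E := by omega
    have hfz : (0 : ℝ) < ((Fc E - Q'.card : ℕ) : ℝ) := by
      have : Q'.card < Fc E := by omega
      exact_mod_cast Nat.sub_pos_of_lt this
    have step : (Np E Q D : ℝ) / ((Fc E).descFactorial Q.card : ℝ)
        = (Np E Q' D : ℝ) / ((Fc E).descFactorial Q'.card : ℝ) := by
      rw [hN, hdF]
      push_cast
      rw [mul_comm ((Np E Q' D : ℝ)) _, mul_div_mul_left _ _ (ne_of_gt hfz)]
    rw [step]
    exact ih Q' hsub' hun' hcard' (by omega)

lemma val_eq_of_cons {E : Match m n} {D : SATerm (Fin m × Fin r)} (hc : consE E D) :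
    val E r D = (Np E (UM E D) D : ℝ) / ((Fc E).descFactorial (UM E D).card : ℝ) := by
  unfold val; rw [if_pos hc]

lemma val_eq_zero_of_not_cons {E : Match m n} {D : SATerm (Fin m × Fin r)}
    (hc : ¬ consE E D) : val E r D = 0 := by
  unfold val; rw [if_neg hc]

lemma val_insert_formula (E : Match m n) (D : SATerm (Fin m × Fin r)) (p : Fin m)
    (hm : E.matched p = false) (hpUM : p ∉ UM E D) (hc : consE E D)
    (hq : (UM E D).card < Fc E) :
    val E r D = (Np E (insert p (UM E D)) D : ℝ)
      / ((Fc E).descFactorial ((UM E D).card + 1) : ℝ) := by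
  rw [Np_insert E (UM E D) D p hm hpUM (not_mem_UM_fresh hm hpUM), Nat.descFactorial_succ,
    val_eq_of_cons hc]
  have hfz : (0 : ℝ) < ((Fc E - (UM E D).card : ℕ) : ℝ) :=
    by exact_mod_cast Nat.sub_pos_of_lt hq
  push_cast
  rw [mul_comm ((Np E (UM E D) D : ℝ)) _, mul_div_mul_left _ _ (ne_of_gt hfz)]

lemma val_extend_matched (E : Match m n) (D : SATerm (Fin m × Fin r)) (p : Fin m)
    (k : Fin r) (b : Bool) (hm : E.matched p = true) (hD : D (p, k) = none)
    (hc : consE E D) (hbit : Nat.testBit (E.hole p : ℕ) k.val = b) :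
    val E r (D.extend (p, k) b) = val E r D := by
  unfold val
  rw [if_pos ((consE_extend_matched_iff E D p k b hm hD).mpr ⟨hc, hbit⟩), if_pos hc,
    UM_extend_matched E D p k b hm, Np_extend_matched E _ D p k b hm]

/-- constraint (i) -/
lemma holds_top (E : Match m n) (r : ℕ) :
    val E r (fun _ => none) = 1 := by
  classical
  have hc : consE E (fun _ => none : SATerm (Fin m × Fin r)) := by
    intro p k c _ hDc; cases hDc
  have hUM : UM E (fun _ => none : SATerm (Fin m × Fin r)) = ∅ := by
    ext p
    simp only [UM, Finset.mem_filter, Finset.mem_univ, true_and, Finset.notMem_empty,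
      iff_false]
    rintro ⟨-, ⟨k, hk⟩⟩
    exact hk rfl
  have hPl : Pl E (∅ : Finset (Fin m)) (fun _ => none : SATerm (Fin m × Fin r))
      = {(fun _ => none : Fin m → Option (Fin n))} := by
    ext τ
    refine mem_Pl.trans ?_
    rw [Finset.mem_singleton]
    constructor
    · rintro ⟨h1, -, -, -⟩
      funext y
      have := h1 y
      simp only [Finset.notMem_empty, iff_false] at this
      exact Option.not_isSome_iff_eq_none.mp this
    · rintro rfl
      refine ⟨?_, ?_, ?_, ?_⟩
      · intro y; simp
      · intro y y' _ hnn; exact absurd rfl hnn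
      · intro y h hy; cases hy
      · intro y k c h _ _ hy; cases hy
  rw [val_eq_of_cons hc, hUM]
  unfold Np
  rw [hPl, Finset.card_singleton, Finset.card_empty, Nat.descFactorial_zero]
  norm_num

/-- constraint (ii) -/
lemma holds_negation (E : Match m n) {t : ℕ} (htF : t + 2 ≤ Fc E)
    (D : SATerm (Fin m × Fin r)) (x : Fin m × Fin r)
    (hnarrow : consE E D → (UM E D).card < t) (hx : D x = none) :
    val E r (D.extend x true) + val E r (D.extend x false) = val E r D := by
  classical
  obtain ⟨p, k⟩ := x
  rcases hm : E.matched p with _ | _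
  · -- unmatched
    by_cases hc : consE E D
    · have hciff : ∀ b, consE E (D.extend (p, k) b) :=
        fun b => (consE_extend_unmatched E D p k b hm).mpr hc
      by_cases hpUM : p ∈ UM E D
      · have hUMe : ∀ b, UM E (D.extend (p, k) b) = UM E D := by
          intro b
          rw [UM_extend_unmatched E D p k b hm, Finset.insert_eq_self.mpr hpUM]
        rw [val_eq_of_cons (hciff true), val_eq_of_cons (hciff false), val_eq_of_cons hc,
          hUMe, hUMe, ← add_div]
        congr 1
        exact_mod_cast Np_extend_split E (UM E D) D p k hm hpUM hx
      · have hq : (UM E D).card < Fc E := by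
          have := hnarrow hc; omega
        have hUMe : ∀ b, UM E (D.extend (p, k) b) = insert p (UM E D) :=
          fun b => UM_extend_unmatched E D p k b hm
        have hcardi : (insert p (UM E D)).card = (UM E D).card + 1 :=
          Finset.card_insert_of_notMem hpUM
        rw [val_eq_of_cons (hciff true), val_eq_of_cons (hciff false),
          val_insert_formula E D p hm hpUM hc hq, hUMe, hUMe, hcardi, ← add_div]
        congr 1
        exact_mod_cast Np_extend_split E (insert p (UM E D)) D p k hm
          (Finset.mem_insert_self p _) hx
    · have hciff : ∀ b, ¬ consE E (D.extend (p, k) b) :=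
        fun b h => hc ((consE_extend_unmatched E D p k b hm).mp h)
      rw [val_eq_zero_of_not_cons (hciff true), val_eq_zero_of_not_cons (hciff false),
        val_eq_zero_of_not_cons hc]
      norm_num
  · -- matched
    by_cases hc : consE E D
    · rcases hbit : Nat.testBit (E.hole p : ℕ) k.val with _ | _
      · have h1 : val E r (D.extend (p, k) false) = val E r D :=
          val_extend_matched E D p k false hm hx hc hbit
        have h2 : val E r (D.extend (p, k) true) = 0 := by
          apply val_eq_zero_of_not_cons
          rw [consE_extend_matched_iff E D p k true hm hx]
          rintro ⟨-, hb⟩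
          rw [hbit] at hb; exact Bool.noConfusion hb
        rw [h1, h2]; ring
      · have h1 : val E r (D.extend (p, k) true) = val E r D :=
          val_extend_matched E D p k true hm hx hc hbit
        have h2 : val E r (D.extend (p, k) false) = 0 := by
          apply val_eq_zero_of_not_cons
          rw [consE_extend_matched_iff E D p k false hm hx]
          rintro ⟨-, hb⟩
          rw [hbit] at hb; exact Bool.noConfusion hb
        rw [h1, h2]; ring
    · have hciff : ∀ b, ¬ consE E (D.extend (p, k) b) := by
        intro b h
        rw [consE_extend_matched_iff E D p k b hm hx] at h
        exact hc h.1
      rw [val_eq_zero_of_not_cons (hciff true), val_eq_zero_of_not_cons (hciff false),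
        val_eq_zero_of_not_cons hc]
      norm_num

/-- constraint (iii) -/
lemma holds_bound (E : Match m n) {t : ℕ} (htF : t + 2 ≤ Fc E)
    (D : SATerm (Fin m × Fin r)) (x : Fin m × Fin r) (b : Bool)
    (hnarrow : consE E D → (UM E D).card < t) :
    0 ≤ evalLit (val E r) D x b ∧ evalLit (val E r) D x b ≤ val E r D := by
  classical
  constructor
  · unfold evalLit
    split
    · exact le_rfl
    · exact val_nonneg E r _
  · unfold evalLit
    split
    · exact val_nonneg E r D
    · rename_i hDne
      rcases hDx : D x with _ | c
      · obtain ⟨p, k⟩ := x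
        rcases hm : E.matched p with _ | _
        · -- unmatched
          by_cases hc : consE E D
          · by_cases hpUM : p ∈ UM E D
            · rw [val_eq_of_cons ((consE_extend_unmatched E D p k b hm).mpr hc),
                val_eq_of_cons hc, UM_extend_unmatched E D p k b hm,
                Finset.insert_eq_self.mpr hpUM]
              gcongr
              exact_mod_cast Np_extend_le E (UM E D) D (p, k) b hDx
            · have hq : (UM E D).card < Fc E := by
                have := hnarrow hc; omega
              rw [val_eq_of_cons ((consE_extend_unmatched E D p k b hm).mpr hc),
                UM_extend_unmatched E D p k b hm, Finset.card_insert_of_notMem hpUM,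
                val_insert_formula E D p hm hpUM hc hq]
              gcongr
              exact_mod_cast Np_extend_le E (insert p (UM E D)) D (p, k) b hDx
          · rw [val_eq_zero_of_not_cons hc, val_eq_zero_of_not_cons
              (fun h => hc ((consE_extend_unmatched E D p k b hm).mp h))]
        · -- matched
          by_cases hce : consE E (D.extend (p, k) b)
          · have := (consE_extend_matched_iff E D p k b hm hDx).mp hce
            rw [val_extend_matched E D p k b hm hDx this.1 this.2]
          · rw [val_eq_zero_of_not_cons hce]
            exact val_nonneg E r D
      · have hcb : c = b := by
          rcases c with _ | _ <;> rcases b with _ | _ <;> simp_all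
        rw [hcb] at hDx
        rw [extend_eq_self hDx]

lemma evalLit_nonneg (E : Match m n) (r : ℕ) (D : SATerm (Fin m × Fin r))
    (x : Fin m × Fin r) (b : Bool) : 0 ≤ evalLit (val E r) D x b := by
  unfold evalLit
  split
  · exact le_rfl
  · exact val_nonneg E r _

lemma exists_bit_ne (hn2 : n = 2 ^ r) (h a : Fin n) (hne : h ≠ a) :
    ∃ k : Fin r, Nat.testBit (h : ℕ) k.val ≠ Nat.testBit (a : ℕ) k.val := by
  by_contra hall
  push_neg at hall
  apply hne
  have : (h : ℕ) = (a : ℕ) := by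
    apply Nat.eq_of_testBit_eq
    intro j
    by_cases hj : j < r
    · exact hall ⟨j, hj⟩
    · push_neg at hj
      have h1 : (h : ℕ) < 2 ^ j :=
        lt_of_lt_of_le (hn2 ▸ h.isLt) (Nat.pow_le_pow_right (by norm_num) hj)
      have h2 : (a : ℕ) < 2 ^ j :=
        lt_of_lt_of_le (hn2 ▸ a.isLt) (Nat.pow_le_pow_right (by norm_num) hj)
      rw [Nat.testBit_lt_two_pow h1, Nat.testBit_lt_two_pow h2]
  exact Fin.ext this

lemma bool_eq_not_of_ne {x y : Bool} (h : x ≠ y) : x = !y := by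
  cases x <;> cases y <;> simp_all

/-- constraint (iv) -/
lemma holds_clause (E : Match m n) {t : ℕ} (htF : t + 2 ≤ Fc E) (hn2 : n = 2 ^ r)
    (D : SATerm (Fin m × Fin r)) (i i' : Fin m) (hii : i ≠ i') (a : Fin n)
    (hnarrow : consE E D → (UM E D).card < t) :
    val E r D ≤ (∑ k : Fin r, evalLit (val E r) D (i, k) (!(Nat.testBit (a : ℕ) k.val)))
      + ∑ k : Fin r, evalLit (val E r) D (i', k) (!(Nat.testBit (a : ℕ) k.val)) := by
  classical
  set g : Fin m → Fin r → ℝ :=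
    fun j k => evalLit (val E r) D (j, k) (!(Nat.testBit (a : ℕ) k.val)) with hg
  have hg0 : ∀ j k, 0 ≤ g j k := fun j k => evalLit_nonneg E r D (j, k) _
  have hsum0 : ∀ j, 0 ≤ ∑ k : Fin r, g j k :=
    fun j => Finset.sum_nonneg (fun k _ => hg0 j k)
  by_cases hc : consE E D
  swap
  · rw [val_eq_zero_of_not_cons hc]
    exact add_nonneg (hsum0 i) (hsum0 i')
  -- case: D contains a literal of the clause
  have hhit : ∀ j : Fin m, ∀ k : Fin r, D (j, k) = some (!(Nat.testBit (a : ℕ) k.val)) →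
      g j k = val E r D := by
    intro j k hDjk
    simp only [hg, evalLit]
    rw [if_neg (by
      rw [hDjk, Bool.not_not]
      intro hcon
      have := Option.some_injective _ hcon
      exact absurd this.symm (by simp)), extend_eq_self hDjk]
  by_cases hi : ∃ k : Fin r, D (i, k) = some (!(Nat.testBit (a : ℕ) k.val))
  · obtain ⟨k, hk⟩ := hi
    calc val E r D = g i k := (hhit i k hk).symm
    _ ≤ ∑ k : Fin r, g i k := Finset.single_le_sum (fun k _ => hg0 i k) (Finset.mem_univ k)
    _ ≤ _ := le_add_of_nonneg_right (hsum0 i')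
  by_cases hi' : ∃ k : Fin r, D (i', k) = some (!(Nat.testBit (a : ℕ) k.val))
  · obtain ⟨k, hk⟩ := hi'
    calc val E r D = g i' k := (hhit i' k hk).symm
    _ ≤ ∑ k : Fin r, g i' k := Finset.single_le_sum (fun k _ => hg0 i' k) (Finset.mem_univ k)
    _ ≤ _ := le_add_of_nonneg_left (hsum0 i)
  push_neg at hi hi'
  have hno : ∀ j ∈ ({i, i'} : Finset (Fin m)), ∀ k : Fin r,
      D (j, k) ≠ some (!(Nat.testBit (a : ℕ) k.val)) := by
    intro j hj k
    rcases Finset.mem_insert.mp hj with rfl | hj'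
    · exact hi k
    · rw [Finset.mem_singleton.mp hj']; exact hi' k
  -- case: some relevant matched pigeon has a hole different from a
  by_cases hdm : ∃ j ∈ ({i, i'} : Finset (Fin m)), E.matched j = true ∧ E.hole j ≠ a
  · obtain ⟨j, hjmem, hjm, hja⟩ := hdm
    obtain ⟨k, hbk⟩ := exists_bit_ne hn2 (E.hole j) a hja
    have hDjk : D (j, k) = none := by
      rcases hDo : D (j, k) with _ | c
      · rfl
      · exfalso
        have hbit := hc j k c hjm hDo
        have : c = !(Nat.testBit (a : ℕ) k.val) := by
          rw [← hbit]; exact bool_eq_not_of_ne (hbit ▸ hbk)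
        exact hno j hjmem k (this ▸ hDo)
    have hgj : g j k = val E r D := by
      simp only [hg, evalLit]
      rw [if_neg (by rw [hDjk]; exact fun h => by cases h)]
      exact val_extend_matched E D j k _ hjm hDjk hc (bool_eq_not_of_ne hbk)
    rcases Finset.mem_insert.mp hjmem with rfl | hj'
    · calc val E r D = g j k := hgj.symm
      _ ≤ ∑ k : Fin r, g j k := Finset.single_le_sum (fun k _ => hg0 j k) (Finset.mem_univ k)
      _ ≤ _ := le_add_of_nonneg_right (hsum0 i')
    · rw [Finset.mem_singleton] at hj'
      subst hj'
      calc val E r D = g j k := hgj.symm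
      _ ≤ ∑ k : Fin r, g j k := Finset.single_le_sum (fun k _ => hg0 j k) (Finset.mem_univ k)
      _ ≤ _ := le_add_of_nonneg_left (hsum0 i)
  push_neg at hdm
  have hall : ∀ j ∈ ({i, i'} : Finset (Fin m)), E.matched j = true → E.hole j = a := by
    intro j hj hjm
    by_contra hne
    exact hne (hdm j hj hjm)
  have hnotboth : ¬ (E.matched i = true ∧ E.matched i' = true) := by
    rintro ⟨h1, h2⟩
    apply hii
    apply E.inj i i' h1 h2
    rw [hall i (Finset.mem_insert_self i _) h1,
      hall i' (Finset.mem_insert_of_mem (Finset.mem_singleton_self i')) h2]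
  -- the counting case
  set P2 : Finset (Fin m) :=
    ({i, i'} : Finset (Fin m)).filter (fun j => E.matched j = false) with hP2
  set Q' : Finset (Fin m) := UM E D ∪ P2 with hQ'
  have hQ'un : ∀ p ∈ Q', E.matched p = false := by
    intro p hp
    rcases Finset.mem_union.mp hp with h | h
    · exact UM_unmatched E D p h
    · exact (Finset.mem_filter.mp h).2
  have hsubQ' : UM E D ⊆ Q' := Finset.subset_union_left
  have hq : (UM E D).card < t := hnarrow hc
  have hQ'card : Q'.card ≤ Fc E := by
    have h1 : Q'.card ≤ (UM E D).card + P2.card := by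
      rw [hQ']; exact Finset.card_union_le _ _
    have h2 : P2.card ≤ 2 := by
      calc P2.card ≤ ({i, i'} : Finset (Fin m)).card := Finset.card_filter_le _ _
      _ = 2 := Finset.card_pair hii
    omega
  set pairs : Finset (Fin m × Fin r) :=
    (P2 ×ˢ (Finset.univ : Finset (Fin r))).filter (fun x => D x = none) with hpairs
  -- the covering step
  have hcov : Pl E Q' D ⊆ pairs.biUnion
      (fun x => Pl E Q' (D.extend x (!(Nat.testBit (a : ℕ) x.2.val)))) := by
    intro τ hτmem
    have hτ := mem_Pl.mp hτmem
    obtain ⟨h1, h2, h3, h4⟩ := hτ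
    -- find an unmatched j among i, i' whose placed hole differs from a
    have hfind : ∃ j ∈ P2, ∃ h : Fin n, τ j = some h ∧ h ≠ a := by
      rcases hmi : E.matched i with _ | _
      · rcases hmi' : E.matched i' with _ | _
        · -- both unmatched
          have hiP2 : i ∈ P2 := by
            rw [hP2, Finset.mem_filter]
            exact ⟨Finset.mem_insert_self i _, hmi⟩
          have hi'P2 : i' ∈ P2 := by
            rw [hP2, Finset.mem_filter]
            exact ⟨Finset.mem_insert_of_mem (Finset.mem_singleton_self i'), hmi'⟩
          have hsi : (τ i).isSome := (h1 i).mpr (Finset.mem_union_right _ hiP2)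
          have hsi' : (τ i').isSome := (h1 i').mpr (Finset.mem_union_right _ hi'P2)
          obtain ⟨h0, hh0⟩ := Option.isSome_iff_exists.mp hsi
          obtain ⟨h0', hh0'⟩ := Option.isSome_iff_exists.mp hsi'
          have hne : h0 ≠ h0' := by
            intro he
            apply h2 i i' hii (by rw [hh0]; exact fun h => by cases h)
            rw [hh0, hh0', he]
          by_cases ha : h0 = a
          · exact ⟨i', hi'P2, h0', hh0', by rw [← ha]; exact fun h => hne h.symm⟩
          · exact ⟨i, hiP2, h0, hh0, ha⟩
        · -- i unmatched, i' matched (hole i' = a)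
          have hiP2 : i ∈ P2 := by
            rw [hP2, Finset.mem_filter]
            exact ⟨Finset.mem_insert_self i _, hmi⟩
          have hsi : (τ i).isSome := (h1 i).mpr (Finset.mem_union_right _ hiP2)
          obtain ⟨h0, hh0⟩ := Option.isSome_iff_exists.mp hsi
          refine ⟨i, hiP2, h0, hh0, ?_⟩
          intro he
          have hfree := h3 i h0 hh0
          rw [Free, Finset.mem_filter] at hfree
          apply hfree.2 i' hmi'
          rw [hall i' (Finset.mem_insert_of_mem (Finset.mem_singleton_self i')) hmi', ← he]
      · -- i matched: then i' unmatched
        rcases hmi' : E.matched i' with _ | _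
        · have hi'P2 : i' ∈ P2 := by
            rw [hP2, Finset.mem_filter]
            exact ⟨Finset.mem_insert_of_mem (Finset.mem_singleton_self i'), hmi'⟩
          have hsi' : (τ i').isSome := (h1 i').mpr (Finset.mem_union_right _ hi'P2)
          obtain ⟨h0, hh0⟩ := Option.isSome_iff_exists.mp hsi'
          refine ⟨i', hi'P2, h0, hh0, ?_⟩
          intro he
          have hfree := h3 i' h0 hh0
          rw [Free, Finset.mem_filter] at hfree
          apply hfree.2 i hmi
          rw [hall i (Finset.mem_insert_self i _) hmi, ← he]
        · exact absurd ⟨hmi, hmi'⟩ hnotboth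
    obtain ⟨j, hjP2, h0, hh0, hha⟩ := hfind
    obtain ⟨k, hbk⟩ := exists_bit_ne hn2 h0 a hha
    have hjm : E.matched j = false := (Finset.mem_filter.mp hjP2).2
    have hjpair : j ∈ ({i, i'} : Finset (Fin m)) := (Finset.mem_filter.mp hjP2).1
    have hDjk : D (j, k) = none := by
      rcases hDo : D (j, k) with _ | c
      · rfl
      · exfalso
        have hbit := h4 j k c h0 hjm hDo hh0
        have : c = !(Nat.testBit (a : ℕ) k.val) := by
          rw [← hbit]; exact bool_eq_not_of_ne (hbit ▸ hbk)
        exact hno j hjpair k (this ▸ hDo)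
    apply Finset.mem_biUnion.mpr
    refine ⟨(j, k), ?_, ?_⟩
    · rw [hpairs, Finset.mem_filter, Finset.mem_product]
      exact ⟨⟨hjP2, Finset.mem_univ k⟩, hDjk⟩
    · rw [mem_Pl, isPl_extend_iff E Q' D j k _ hDjk]
      refine ⟨⟨h1, h2, h3, h4⟩, fun _ h hsh => ?_⟩
      rw [hh0] at hsh
      cases hsh
      exact bool_eq_not_of_ne hbk
  have hcount : (Np E Q' D : ℝ) ≤
      ∑ x ∈ pairs, (Np E Q' (D.extend x (!(Nat.testBit (a : ℕ) x.2.val))) : ℝ) := by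
    have h1 : Np E Q' D ≤
        ∑ x ∈ pairs, Np E Q' (D.extend x (!(Nat.testBit (a : ℕ) x.2.val))) := by
      calc Np E Q' D ≤ (pairs.biUnion
          (fun x => Pl E Q' (D.extend x (!(Nat.testBit (a : ℕ) x.2.val))))).card :=
        Finset.card_le_card hcov
      _ ≤ _ := Finset.card_biUnion_le
    exact_mod_cast h1
  -- convert to the valuation
  have hvalD : val E r D = (Np E Q' D : ℝ) / ((Fc E).descFactorial Q'.card : ℝ) := by
    rw [val_eq_of_cons hc, ← Np_div_eq E D Q' hsubQ' hQ'un hQ'card]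
  have hvalext : ∀ x ∈ pairs, (Np E Q' (D.extend x (!(Nat.testBit (a : ℕ) x.2.val))) : ℝ)
      / ((Fc E).descFactorial Q'.card : ℝ)
      = val E r (D.extend x (!(Nat.testBit (a : ℕ) x.2.val))) := by
    rintro ⟨j, k⟩ hx
    rw [hpairs, Finset.mem_filter, Finset.mem_product] at hx
    obtain ⟨⟨hjP2, -⟩, hDx⟩ := hx
    have hjm : E.matched j = false := (Finset.mem_filter.mp hjP2).2
    have hce : consE E (D.extend (j, k) (!(Nat.testBit (a : ℕ) k.val))) :=
      (consE_extend_unmatched E D j k _ hjm).mpr hc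
    rw [val_eq_of_cons hce]
    apply Np_div_eq E _ Q' _ hQ'un hQ'card
    rw [UM_extend_unmatched E D j k _ hjm]
    apply Finset.insert_subset (Finset.mem_union_right _ hjP2) hsubQ'
  have hgpair : ∀ x ∈ pairs, val E r (D.extend x (!(Nat.testBit (a : ℕ) x.2.val)))
      = g x.1 x.2 := by
    rintro ⟨j, k⟩ hx
    rw [hpairs, Finset.mem_filter] at hx
    simp only [hg, evalLit]
    rw [if_neg (by rw [hx.2]; exact fun h => by cases h)]
  calc val E r D = (Np E Q' D : ℝ) / ((Fc E).descFactorial Q'.card : ℝ) := hvalD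
  _ ≤ (∑ x ∈ pairs, (Np E Q' (D.extend x (!(Nat.testBit (a : ℕ) x.2.val))) : ℝ))
      / ((Fc E).descFactorial Q'.card : ℝ) := by gcongr
  _ = ∑ x ∈ pairs, (Np E Q' (D.extend x (!(Nat.testBit (a : ℕ) x.2.val))) : ℝ)
      / ((Fc E).descFactorial Q'.card : ℝ) := Finset.sum_div _ _ _
  _ = ∑ x ∈ pairs, g x.1 x.2 := by
    apply Finset.sum_congr rfl
    intro x hx
    rw [hvalext x hx, hgpair x hx]
  _ ≤ ∑ x ∈ ({i, i'} : Finset (Fin m)) ×ˢ (Finset.univ : Finset (Fin r)), g x.1 x.2 := by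
    apply Finset.sum_le_sum_of_subset_of_nonneg
    · rw [hpairs]
      intro x hx
      rw [Finset.mem_filter, Finset.mem_product] at hx
      rw [Finset.mem_product]
      exact ⟨(Finset.mem_filter.mp hx.1.1).1, hx.1.2⟩
    · intro x _ _
      exact hg0 x.1 x.2
  _ = _ := by
    rw [Finset.sum_product, Finset.sum_pair hii]

section PermCount

variable {α : Type} [Fintype α] [DecidableEq α]

lemma card_filter_not_mem_image (t : ℕ) (P : ℕ → α)
    (hinj : ∀ j j', j < t → j' < t → P j = P j' → j = j') :
    (Finset.univ.filter (fun z : α => ∀ j < t, z ≠ P j)).card = Fintype.card α - t := by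
  classical
  have himg : (Finset.univ.filter (fun z : α => ¬ ∀ j < t, z ≠ P j))
      = (Finset.range t).image P := by
    ext z
    simp only [Finset.mem_filter, Finset.mem_univ, true_and, Finset.mem_image,
      Finset.mem_range, not_forall]
    constructor
    · rintro ⟨j, hj, hz⟩
      exact ⟨j, hj, by push_neg at hz; exact hz.symm⟩
    · rintro ⟨j, hj, hz⟩
      exact ⟨j, hj, by rw [← hz]; simp⟩
  have h1 : (Finset.univ.filter (fun z : α => ∀ j < t, z ≠ P j)).card
      + (Finset.univ.filter (fun z : α => ¬ ∀ j < t, z ≠ P j)).card = Fintype.card α := by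
    rw [Finset.card_filter_add_card_filter_not]
    exact Finset.card_univ
  have h2 : ((Finset.range t).image P).card = t := by
    rw [Finset.card_image_of_injOn, Finset.card_range]
    intro j hj j' hj' h
    exact hinj j j' (Finset.mem_range.mp hj) (Finset.mem_range.mp hj') h
  rw [himg, h2] at h1
  have ht : t ≤ Fintype.card α := by
    rw [← h2, ← himg]
    calc _ ≤ (Finset.univ : Finset α).card := Finset.card_filter_le _ _
    _ = _ := Finset.card_univ
  omega

lemma perm_avoid_step (t : ℕ) (P : ℕ → α)
    (hinj : ∀ j j', j < t + 1 → j' < t + 1 → P j = P j' → j = j') (B : ℕ → Finset α) :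
    (Finset.univ.filter (fun π : Equiv.Perm α => ∀ j < t + 1, π (P j) ∉ B j)).card
        * (Fintype.card α - t)
      ≤ (Finset.univ.filter (fun π : Equiv.Perm α => ∀ j < t, π (P j) ∉ B j)).card
        * (Fintype.card α - (B t).card) := by
  classical
  set prev := Finset.univ.filter (fun π : Equiv.Perm α => ∀ j < t, π (P j) ∉ B j) with hprev
  set new := Finset.univ.filter (fun π : Equiv.Perm α => ∀ j < t + 1, π (P j) ∉ B j) with hnew
  set Z := Finset.univ.filter (fun z : α => ∀ j < t, z ≠ P j) with hZ
  set Ebig := (prev ×ˢ (Finset.univ : Finset α)).filter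
    (fun pz => (∀ j < t, pz.2 ≠ P j) ∧ pz.1 pz.2 ∉ B t) with hE
  -- lower bound on |Ebig|
  have hlow : new.card * (Fintype.card α - t) ≤ Ebig.card := by
    rw [← card_filter_not_mem_image t P
      (fun j j' hj hj' => hinj j j' (by omega) (by omega)), ← hZ, ← Finset.card_product]
    apply Finset.card_le_card_of_injOn
      (fun pz => ((Equiv.swap (P t) pz.2).trans pz.1, pz.2))
    · rintro ⟨π', z⟩ hpz
      rw [Finset.mem_coe, Finset.mem_product, hnew, Finset.mem_filter] at hpz
      obtain ⟨⟨-, hπ'⟩, hzZ⟩ := hpz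
      rw [hZ, Finset.mem_filter] at hzZ
      rw [Finset.mem_coe, hE, Finset.mem_filter, Finset.mem_product]
      refine ⟨⟨?_, Finset.mem_univ _⟩, hzZ.2, ?_⟩
      · rw [hprev, Finset.mem_filter]
        refine ⟨Finset.mem_univ _, ?_⟩
        intro j hj
        have h1 : P j ≠ P t := fun h => by
          have := hinj j t (by omega) (by omega) h; omega
        have h2 : P j ≠ z := fun h => hzZ.2 j hj h.symm
        simp only [Equiv.trans_apply]
        rw [Equiv.swap_apply_of_ne_of_ne h1 h2]
        exact hπ' j (by omega)
      · simp only [Equiv.trans_apply]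
        rw [Equiv.swap_apply_right]
        exact hπ' t (by omega)
    · rintro ⟨π₁, z₁⟩ h₁ ⟨π₂, z₂⟩ h₂ heq
      simp only [Prod.mk.injEq] at heq
      obtain ⟨heq1, rfl⟩ := heq
      have : π₁ = π₂ := by
        have := congrArg (fun e => (Equiv.swap (P t) z₁).symm.trans e) heq1
        simpa [← Equiv.trans_assoc] using this
      rw [this]
  -- upper bound on |Ebig|
  have hupp : Ebig.card ≤ prev.card * (Fintype.card α - (B t).card) := by
    have hsub : Ebig ⊆ prev.biUnion
        (fun π => {π} ×ˢ (Finset.univ.filter (fun z => π z ∉ B t))) := by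
      rintro ⟨π, z⟩ hpz
      rw [hE, Finset.mem_filter, Finset.mem_product] at hpz
      rw [Finset.mem_biUnion]
      exact ⟨π, hpz.1.1, by
        rw [Finset.mem_product]
        exact ⟨Finset.mem_singleton_self π, Finset.mem_filter.mpr
          ⟨Finset.mem_univ _, hpz.2.2⟩⟩⟩
    calc Ebig.card ≤ _ := Finset.card_le_card hsub
    _ ≤ ∑ π ∈ prev, ({π} ×ˢ (Finset.univ.filter (fun z => π z ∉ B t))).card :=
      Finset.card_biUnion_le
    _ = ∑ π ∈ prev, (Fintype.card α - (B t).card) := by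
      apply Finset.sum_congr rfl
      intro π _
      rw [Finset.card_product, Finset.card_singleton, one_mul]
      have himg : (Finset.univ.filter (fun z => ¬ π z ∉ B t)) = (B t).image π.symm := by
        ext z
        simp only [Finset.mem_filter, Finset.mem_univ, true_and, Finset.mem_image, not_not]
        constructor
        · intro h; exact ⟨π z, h, by simp⟩
        · rintro ⟨w, hw, rfl⟩; simpa using hw
      have h1 : (Finset.univ.filter (fun z => π z ∉ B t)).card
          + (Finset.univ.filter (fun z => ¬ π z ∉ B t)).card = Fintype.card α := by
        rw [Finset.card_filter_add_card_filter_not]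
        exact Finset.card_univ
      have h2 : ((B t).image π.symm).card = (B t).card :=
        Finset.card_image_of_injective _ (Equiv.injective _)
      rw [himg, h2] at h1
      have ht : (B t).card ≤ Fintype.card α := by
        calc _ ≤ (Finset.univ : Finset α).card := Finset.card_le_univ _
        _ = _ := Finset.card_univ
      omega
    _ = _ := by rw [Finset.sum_const, smul_eq_mul]
  exact le_trans hlow hupp

lemma perm_avoid (t : ℕ) (P : ℕ → α)
    (hinj : ∀ j j', j < t → j' < t → P j = P j' → j = j') (B : ℕ → Finset α) :
    (Finset.univ.filter (fun π : Equiv.Perm α => ∀ j < t, π (P j) ∉ B j)).card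
        * (Fintype.card α).descFactorial t
      ≤ (Fintype.card α).factorial * ∏ j ∈ Finset.range t, (Fintype.card α - (B j).card) := by
  classical
  induction t with
  | zero =>
    simp only [Nat.descFactorial_zero, mul_one, Finset.range_zero, Finset.prod_empty]
    have : (Finset.univ.filter (fun π : Equiv.Perm α => ∀ j < 0, π (P j) ∉ B j))
        = Finset.univ := by
      apply Finset.filter_true_of_mem
      intro π _ j hj
      omega
    rw [this, Finset.card_univ, Fintype.card_perm]
  | succ t ih =>
    have ih' := ih (fun j j' hj hj' => hinj j j' (by omega) (by omega))
    have step := perm_avoid_step t P hinj B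
    calc (Finset.univ.filter (fun π : Equiv.Perm α => ∀ j < t + 1, π (P j) ∉ B j)).card
        * (Fintype.card α).descFactorial (t + 1)
        = ((Finset.univ.filter (fun π : Equiv.Perm α => ∀ j < t + 1, π (P j) ∉ B j)).card
          * (Fintype.card α - t)) * (Fintype.card α).descFactorial t := by
          rw [Nat.descFactorial_succ]; ring
      _ ≤ ((Finset.univ.filter (fun π : Equiv.Perm α => ∀ j < t, π (P j) ∉ B j)).card
          * (Fintype.card α - (B t).card)) * (Fintype.card α).descFactorial t := by
          exact Nat.mul_le_mul_right _ step
      _ = ((Finset.univ.filter (fun π : Equiv.Perm α => ∀ j < t, π (P j) ∉ B j)).card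
          * (Fintype.card α).descFactorial t) * (Fintype.card α - (B t).card) := by ring
      _ ≤ ((Fintype.card α).factorial * ∏ j ∈ Finset.range t,
            (Fintype.card α - (B j).card)) * (Fintype.card α - (B t).card) :=
          Nat.mul_le_mul_right _ ih'
      _ = _ := by rw [Finset.prod_range_succ]; ring

end PermCount

lemma card_filter_lt (K M : ℕ) (hMK : M ≤ K) :
    (Finset.univ.filter (fun h : Fin K => (h : ℕ) < M)).card = M := by
  classical
  have key : (Finset.univ.filter (fun h : Fin K => (h : ℕ) < M)).card
      = (Finset.range M).card := by
    apply Finset.card_bij (fun (h : Fin K) _ => (h : ℕ))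
    · intro h hh
      rw [Finset.mem_filter] at hh
      exact Finset.mem_range.mpr hh.2
    · intro h₁ _ h₂ _ heq
      exact Fin.ext heq
    · intro x hx
      rw [Finset.mem_range] at hx
      exact ⟨⟨x, by omega⟩, Finset.mem_filter.mpr ⟨Finset.mem_univ _, hx⟩, rfl⟩
  rw [key, Finset.card_range]

lemma count_bit_le (rr k : ℕ) (hk : k < rr) (c : Bool) (K : ℕ) :
    (Finset.univ.filter
      (fun h : Fin K => (h : ℕ) < 2 ^ rr ∧ Nat.testBit (h : ℕ) k = c)).card
      ≤ 2 ^ (rr - 1) := by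
  classical
  rw [← Finset.card_range (2 ^ (rr - 1))]
  apply Finset.card_le_card_of_injOn
    (fun h : Fin K => ((h : ℕ) / 2 ^ (k + 1)) * 2 ^ k + (h : ℕ) % 2 ^ k)
  · intro h hh
    rw [Finset.mem_coe, Finset.mem_filter] at hh
    obtain ⟨-, hlt, -⟩ := hh
    rw [Finset.mem_coe, Finset.mem_range]
    have hq : (h : ℕ) / 2 ^ (k + 1) < 2 ^ (rr - 1 - k) := by
      rw [Nat.div_lt_iff_lt_mul (by positivity)]
      calc (h : ℕ) < 2 ^ rr := hlt
      _ = 2 ^ (rr - 1 - k) * 2 ^ (k + 1) := by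
        rw [← pow_add]; congr 1; omega
    have hr : (h : ℕ) % 2 ^ k < 2 ^ k := Nat.mod_lt _ (by positivity)
    calc (h : ℕ) / 2 ^ (k + 1) * 2 ^ k + (h : ℕ) % 2 ^ k
        < ((h : ℕ) / 2 ^ (k + 1) + 1) * 2 ^ k := by
          rw [add_mul, one_mul]; omega
    _ ≤ 2 ^ (rr - 1 - k) * 2 ^ k := Nat.mul_le_mul_right _ (by omega)
    _ = 2 ^ (rr - 1) := by rw [← pow_add]; congr 1; omega
  · intro h₁ hh₁ h₂ hh₂ heq
    rw [Finset.mem_coe, Finset.mem_filter] at hh₁ hh₂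
    obtain ⟨-, hlt₁, hb₁⟩ := hh₁
    obtain ⟨-, hlt₂, hb₂⟩ := hh₂
    simp only at heq
    have h2k : 0 < 2 ^ k := by positivity
    have hrec : ∀ q s : ℕ, s < 2 ^ k → (q * 2 ^ k + s) / 2 ^ k = q := by
      intro q s hs
      rw [add_comm, Nat.add_mul_div_right _ _ h2k, Nat.div_eq_of_lt hs, zero_add]
    have hrem : ∀ q s : ℕ, s < 2 ^ k → (q * 2 ^ k + s) % 2 ^ k = s := by
      intro q s hs
      rw [mul_comm, Nat.mul_add_mod, Nat.mod_eq_of_lt hs]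
    have hr₁ : (h₁ : ℕ) % 2 ^ k < 2 ^ k := Nat.mod_lt _ h2k
    have hr₂ : (h₂ : ℕ) % 2 ^ k < 2 ^ k := Nat.mod_lt _ h2k
    have hqe : (h₁ : ℕ) / 2 ^ (k + 1) = (h₂ : ℕ) / 2 ^ (k + 1) := by
      have := congrArg (fun x => x / 2 ^ k) heq
      simpa [hrec _ _ hr₁, hrec _ _ hr₂] using this
    have hse : (h₁ : ℕ) % 2 ^ k = (h₂ : ℕ) % 2 ^ k := by
      have := congrArg (fun x => x % 2 ^ k) heq
      simpa [hrem _ _ hr₁, hrem _ _ hr₂] using this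
    have hbitnum : ((h₁ : ℕ) / 2 ^ k) % 2 = ((h₂ : ℕ) / 2 ^ k) % 2 := by
      have t₁ := Nat.testBit_eq_decide_div_mod_eq (x := (h₁ : ℕ)) (i := k)
      have t₂ := Nat.testBit_eq_decide_div_mod_eq (x := (h₂ : ℕ)) (i := k)
      rw [hb₁] at t₁
      rw [hb₂] at t₂
      have m₁ : ((h₁ : ℕ) / 2 ^ k) % 2 < 2 := Nat.mod_lt _ (by norm_num)
      have m₂ : ((h₂ : ℕ) / 2 ^ k) % 2 < 2 := Nat.mod_lt _ (by norm_num)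
      rcases c with _ | _
      · have u₁ : ((h₁ : ℕ) / 2 ^ k) % 2 ≠ 1 := by
          intro hu; rw [hu] at t₁; simp at t₁
        have u₂ : ((h₂ : ℕ) / 2 ^ k) % 2 ≠ 1 := by
          intro hu; rw [hu] at t₂; simp at t₂
        omega
      · have u₁ : ((h₁ : ℕ) / 2 ^ k) % 2 = 1 := of_decide_eq_true t₁.symm
        have u₂ : ((h₂ : ℕ) / 2 ^ k) % 2 = 1 := of_decide_eq_true t₂.symm
        omega
    have hmod : (h₁ : ℕ) % 2 ^ (k + 1) = (h₂ : ℕ) % 2 ^ (k + 1) := by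
      rw [Nat.mod_pow_succ, Nat.mod_pow_succ, hbitnum, hse]
    have : (h₁ : ℕ) = (h₂ : ℕ) := by
      have d₁ := Nat.div_add_mod (h₁ : ℕ) (2 ^ (k + 1))
      have d₂ := Nat.div_add_mod (h₂ : ℕ) (2 ^ (k + 1))
      have dq : 2 ^ (k + 1) * ((h₁ : ℕ) / 2 ^ (k + 1))
          = 2 ^ (k + 1) * ((h₂ : ℕ) / 2 ^ (k + 1)) := by rw [hqe]
      omega
    exact Fin.ext this

lemma termsOf_finite {V : Type} [DecidableEq V] (c : SACon V) : c.termsOf.Finite := by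
  rcases c with _ | ⟨D, x⟩ | ⟨D, x, b⟩ | ⟨D, C⟩
  · exact Set.finite_singleton _
  · exact (Set.finite_singleton _).insert _ |>.insert _
  · exact (Set.finite_singleton _).insert _
  · apply Set.Finite.insert
    have : {T | ∃ l ∈ C, T = D.extend l.1 l.2}
        = (fun l : V × Bool => D.extend l.1 l.2) '' {l | l ∈ C} := by
      ext T
      simp only [Set.mem_setOf_eq, Set.mem_image]
      constructor
      · rintro ⟨l, hl, rfl⟩; exact ⟨l, hl, rfl⟩
      · rintro ⟨l, hl, rfl⟩; exact ⟨l, hl, rfl⟩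
    rw [this]
    exact (C.finite_toSet).image _

end BPHP

open BPHP in
/-- For all sufficiently large powers of two `n`, every SA refutation of
`BinPHP^{n+1}_n` contains at least `(6/5)^{n/16} − 1` distinct terms. -/
theorem binPHP_SA_size_lower_bound :
    ∃ N : ℕ, ∀ n, N ≤ n → ∀ r : ℕ, n = 2 ^ r →
      ∀ S : Set (SACon (Fin (n + 1) × Fin r)), S.Finite →
        (¬ ∃ v : SATerm (Fin (n + 1) × Fin r) → ℝ,
            ∀ c ∈ S, c.holds (BinPHP (n + 1) n r) v) →
        ((6 / 5 : ℝ) ^ ((n : ℝ) / 16) - 1 ≤ ((⋃ c ∈ S, c.termsOf).ncard : ℝ)) := by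
  classical
  use 2 ^ 16
  intro n hN r hn2 S hSfin hinfeas
  by_contra hcon
  push_neg at hcon
  have hr16 : 16 ≤ r := by
    rw [hn2] at hN
    exact (Nat.pow_le_pow_iff_right (by norm_num)).mp hN
  obtain ⟨t, ht2, hn16, h8t⟩ : ∃ t : ℕ, 2 ≤ t ∧ n = 16 * t ∧ 2 ^ (r - 1) = 8 * t := by
    refine ⟨2 ^ (r - 4), ?_, ?_, ?_⟩
    · calc 2 = 2 ^ 1 := rfl
        _ ≤ 2 ^ (r - 4) := Nat.pow_le_pow_right (by norm_num) (by omega)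
    · rw [hn2]
      calc (2 : ℕ) ^ r = 2 ^ (4 + (r - 4)) := congrArg (2 ^ ·) (by omega)
        _ = 2 ^ 4 * 2 ^ (r - 4) := pow_add 2 4 (r - 4)
        _ = 16 * 2 ^ (r - 4) := by norm_num
    · calc (2 : ℕ) ^ (r - 1) = 2 ^ (3 + (r - 4)) := congrArg (2 ^ ·) (by omega)
        _ = 2 ^ 3 * 2 ^ (r - 4) := pow_add 2 3 (r - 4)
        _ = 8 * 2 ^ (r - 4) := by norm_num
  set K := 24 * t with hK
  set M := 14 * t with hM
  have hMn : M ≤ 2 ^ r := by rw [← hn2]; omega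
  have hmK : n + 1 ≤ K := by omega
  have hKpos : 0 < K := by omega
  have hnpos : 0 < n := by omega
  -- the set of terms
  set T := ⋃ c ∈ S, SACon.termsOf c with hT
  have hTfin : T.Finite := Set.Finite.biUnion hSfin (fun c _ => termsOf_finite c)
  set Tfin := hTfin.toFinset with hTfin'
  -- pigeons into Fin K
  have hpe : ∀ p : Fin (n + 1), p.val < K := fun p => by omega
  let pe : Fin (n + 1) → Fin K := fun p => ⟨p.val, hpe p⟩
  have hpeinj : Function.Injective pe := by
    intro p p' h
    have h2 : (pe p).val = (pe p').val := by rw [h]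
    exact Fin.ext h2
  -- matching from a permutation
  let Ed : Equiv.Perm (Fin K) → Match (n + 1) n := fun π =>
    { matched := fun p => decide ((π (pe p) : ℕ) < M)
      hole := fun p => if h : (π (pe p) : ℕ) < n then ⟨(π (pe p) : ℕ), h⟩ else ⟨0, hnpos⟩
      inj := by
        intro p p' h1 h2 hh
        have l1 : (π (pe p) : ℕ) < M := of_decide_eq_true h1
        have l2 : (π (pe p') : ℕ) < M := of_decide_eq_true h2
        have l1n : (π (pe p) : ℕ) < n := by omega
        have l2n : (π (pe p') : ℕ) < n := by omega
        have hh' : (if h : (π (pe p) : ℕ) < n then (⟨(π (pe p) : ℕ), h⟩ : Fin n)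
              else ⟨0, hnpos⟩)
            = (if h : (π (pe p') : ℕ) < n then (⟨(π (pe p') : ℕ), h⟩ : Fin n)
              else ⟨0, hnpos⟩) := hh
        rw [dif_pos l1n, dif_pos l2n] at hh'
        simp only [Fin.mk.injEq] at hh'
        exact hpeinj (π.injective (Fin.ext hh')) }
  have hEd_matched : ∀ (π : Equiv.Perm (Fin K)) (p : Fin (n + 1)),
      (Ed π).matched p = true ↔ (π (pe p) : ℕ) < M := by
    intro π p
    constructor
    · intro h; exact of_decide_eq_true h
    · intro h; exact decide_eq_true h
  have hEd_hole : ∀ (π : Equiv.Perm (Fin K)) (p : Fin (n + 1)),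
      (π (pe p) : ℕ) < n → ((Ed π).hole p : ℕ) = (π (pe p) : ℕ) := by
    intro π p h
    show ((if h' : (π (pe p) : ℕ) < n then (⟨(π (pe p) : ℕ), h'⟩ : Fin n)
      else ⟨0, hnpos⟩) : Fin n).val = _
    rw [dif_pos h]
  -- the mentioned-pigeons finset
  let mf : SATerm (Fin (n + 1) × Fin r) → Finset (Fin (n + 1)) := fun D =>
    Finset.univ.filter (fun p => ∃ k : Fin r, D (p, k) ≠ none)
  have hUMsub : ∀ (π : Equiv.Perm (Fin K)) (D : SATerm (Fin (n + 1) × Fin r)),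
      UM (Ed π) D ⊆ mf D := by
    intro π D x hx
    rw [UM, Finset.mem_filter] at hx
    exact Finset.mem_filter.mpr ⟨Finset.mem_univ _, hx.2.2⟩
  have hcardK : Fintype.card (Fin K) = K := Fintype.card_fin K
  -- existence of a good permutation
  have hgood : ∃ π : Equiv.Perm (Fin K),
      ∀ D ∈ Tfin, t ≤ (mf D).card → ¬ consE (Ed π) D := by
    by_contra hbad
    push_neg at hbad
    set W := Tfin.filter (fun D => t ≤ (mf D).card) with hW
    have hperD : ∀ D ∈ W,
        (Finset.univ.filter (fun π : Equiv.Perm (Fin K) => consE (Ed π) D)).card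
          * (Fintype.card (Fin K)).descFactorial t
        ≤ (Fintype.card (Fin K)).factorial * (18 * t) ^ t := by
      intro D hD
      obtain ⟨-, hwide⟩ := Finset.mem_filter.mp hD
      obtain ⟨Wp, hWpsub, hWpcard⟩ := Finset.exists_subset_card_eq hwide
      let pig : Fin t → Fin (n + 1) := fun j => (Wp.orderIsoOfFin hWpcard j : Fin (n + 1))
      have hpigmem : ∀ j, pig j ∈ Wp := fun j => (Wp.orderIsoOfFin hWpcard j).2
      have hpiginj : Function.Injective pig := fun j j' h =>
        (Wp.orderIsoOfFin hWpcard).injective (Subtype.ext h)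
      have hbits : ∀ j : Fin t, ∃ (k : Fin r) (c : Bool), D (pig j, k) = some c := by
        intro j
        have hme := hWpsub (hpigmem j)
        rw [Finset.mem_filter] at hme
        obtain ⟨-, k, hk⟩ := hme
        obtain ⟨c, hc⟩ := Option.ne_none_iff_exists'.mp hk
        exact ⟨k, c, hc⟩
      choose kf cf hkc using hbits
      let P : ℕ → Fin K := fun j => if h : j < t then pe (pig ⟨j, h⟩) else ⟨0, hKpos⟩
      let B : ℕ → Finset (Fin K) := fun j => if h : j < t then
          (Finset.univ.filter (fun hh : Fin K => (hh : ℕ) < M)).filter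
            (fun hh : Fin K => ¬ (Nat.testBit (hh : ℕ) (kf ⟨j, h⟩).val = cf ⟨j, h⟩))
        else ∅
      have hPinj : ∀ j j', j < t → j' < t → P j = P j' → j = j' := by
        intro j j' hj hj' heq
        simp only [P, dif_pos hj, dif_pos hj'] at heq
        have := hpiginj (hpeinj heq)
        exact congrArg Fin.val this
      have hsubset : Finset.univ.filter (fun π : Equiv.Perm (Fin K) => consE (Ed π) D)
          ⊆ Finset.univ.filter (fun π : Equiv.Perm (Fin K) => ∀ j < t, π (P j) ∉ B j) := by
        intro π hπ
        rw [Finset.mem_filter] at hπ ⊢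
        refine ⟨Finset.mem_univ _, ?_⟩
        intro j hj hmem
        simp only [B, dif_pos hj] at hmem
        rw [Finset.mem_filter, Finset.mem_filter] at hmem
        obtain ⟨⟨-, hltM⟩, hbit⟩ := hmem
        apply hbit
        have hPj : P j = pe (pig ⟨j, hj⟩) := by simp only [P, dif_pos hj]
        rw [hPj] at hltM
        have hmatch : (Ed π).matched (pig ⟨j, hj⟩) = true :=
          (hEd_matched π _).mpr hltM
        have hbitc := hπ.2 (pig ⟨j, hj⟩) (kf ⟨j, hj⟩) (cf ⟨j, hj⟩) hmatch (hkc ⟨j, hj⟩)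
        have hhole : ((Ed π).hole (pig ⟨j, hj⟩) : ℕ) = (π (pe (pig ⟨j, hj⟩)) : ℕ) :=
          hEd_hole π _ (by omega)
        rw [hhole] at hbitc
        rw [hPj]
        exact hbitc
      have hBcard : ∀ j, (hj : j < t) → 6 * t ≤ (B j).card := by
        intro j hj
        have hBeq : B j = (Finset.univ.filter (fun hh : Fin K => (hh : ℕ) < M)).filter
            (fun hh : Fin K =>
              ¬ (Nat.testBit (hh : ℕ) (kf ⟨j, hj⟩).val = cf ⟨j, hj⟩)) := by
          simp only [B, dif_pos hj]
        have h1 : ((Finset.univ.filter (fun hh : Fin K => (hh : ℕ) < M)).filter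
              (fun hh : Fin K => Nat.testBit (hh : ℕ) (kf ⟨j, hj⟩).val = cf ⟨j, hj⟩)).card
            + ((Finset.univ.filter (fun hh : Fin K => (hh : ℕ) < M)).filter
              (fun hh : Fin K =>
                ¬ (Nat.testBit (hh : ℕ) (kf ⟨j, hj⟩).val = cf ⟨j, hj⟩))).card
            = (Finset.univ.filter (fun hh : Fin K => (hh : ℕ) < M)).card :=
          Finset.card_filter_add_card_filter_not _
        have h2 : (Finset.univ.filter (fun hh : Fin K => (hh : ℕ) < M)).card = M :=
          card_filter_lt K M (by omega)
        have h3 : ((Finset.univ.filter (fun hh : Fin K => (hh : ℕ) < M)).filter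
              (fun hh : Fin K =>
                Nat.testBit (hh : ℕ) (kf ⟨j, hj⟩).val = cf ⟨j, hj⟩)).card ≤ 8 * t := by
          calc _ ≤ (Finset.univ.filter (fun hh : Fin K => (hh : ℕ) < 2 ^ r ∧
              Nat.testBit (hh : ℕ) (kf ⟨j, hj⟩).val = cf ⟨j, hj⟩)).card := by
                apply Finset.card_le_card
                intro hh hmem
                rw [Finset.mem_filter, Finset.mem_filter] at hmem
                rw [Finset.mem_filter]
                exact ⟨Finset.mem_univ _, by omega, hmem.2⟩
          _ ≤ 2 ^ (r - 1) :=
            count_bit_le r (kf ⟨j, hj⟩).val (kf ⟨j, hj⟩).isLt (cf ⟨j, hj⟩) K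
          _ = 8 * t := h8t
        rw [hBeq]
        omega
      calc (Finset.univ.filter (fun π : Equiv.Perm (Fin K) => consE (Ed π) D)).card
            * (Fintype.card (Fin K)).descFactorial t
          ≤ (Finset.univ.filter
              (fun π : Equiv.Perm (Fin K) => ∀ j < t, π (P j) ∉ B j)).card
            * (Fintype.card (Fin K)).descFactorial t :=
            Nat.mul_le_mul_right _ (Finset.card_le_card hsubset)
        _ ≤ (Fintype.card (Fin K)).factorial
            * ∏ j ∈ Finset.range t, (Fintype.card (Fin K) - (B j).card) :=
            perm_avoid t P hPinj B
        _ ≤ (Fintype.card (Fin K)).factorial * (18 * t) ^ t := by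
            apply Nat.mul_le_mul_left
            calc ∏ j ∈ Finset.range t, (Fintype.card (Fin K) - (B j).card)
                ≤ ∏ _j ∈ Finset.range t, (18 * t) := by
                  apply Finset.prod_le_prod'
                  intro j hj
                  have := hBcard j (Finset.mem_range.mp hj)
                  rw [hcardK]
                  omega
              _ = (18 * t) ^ t := by rw [Finset.prod_const, Finset.card_range]
    -- every permutation is bad
    have htotal : (Fintype.card (Fin K)).factorial
        ≤ ∑ D ∈ W, (Finset.univ.filter
            (fun π : Equiv.Perm (Fin K) => consE (Ed π) D)).card := by
      have hsub : (Finset.univ : Finset (Equiv.Perm (Fin K)))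
          ⊆ W.biUnion (fun D => Finset.univ.filter
              (fun π : Equiv.Perm (Fin K) => consE (Ed π) D)) := by
        intro π _
        obtain ⟨D, hD, hwide, hcons⟩ := hbad π
        rw [Finset.mem_biUnion]
        exact ⟨D, Finset.mem_filter.mpr ⟨hD, hwide⟩,
          Finset.mem_filter.mpr ⟨Finset.mem_univ _, hcons⟩⟩
      calc (Fintype.card (Fin K)).factorial
          = (Finset.univ : Finset (Equiv.Perm (Fin K))).card := by
            rw [Finset.card_univ, Fintype.card_perm]
        _ ≤ _ := le_trans (Finset.card_le_card hsub) Finset.card_biUnion_le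
    have hchain : (Fintype.card (Fin K)).factorial
          * (Fintype.card (Fin K)).descFactorial t
        ≤ W.card * ((Fintype.card (Fin K)).factorial * (18 * t) ^ t) := by
      calc (Fintype.card (Fin K)).factorial * (Fintype.card (Fin K)).descFactorial t
          ≤ (∑ D ∈ W, (Finset.univ.filter
              (fun π : Equiv.Perm (Fin K) => consE (Ed π) D)).card)
            * (Fintype.card (Fin K)).descFactorial t :=
            Nat.mul_le_mul_right _ htotal
        _ = ∑ D ∈ W, (Finset.univ.filter
              (fun π : Equiv.Perm (Fin K) => consE (Ed π) D)).card
            * (Fintype.card (Fin K)).descFactorial t := Finset.sum_mul _ _ _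
        _ ≤ ∑ _D ∈ W, (Fintype.card (Fin K)).factorial * (18 * t) ^ t :=
            Finset.sum_le_sum hperD
        _ = W.card * ((Fintype.card (Fin K)).factorial * (18 * t) ^ t) := by
            rw [Finset.sum_const, smul_eq_mul]
    have hdescF : (23 * t) ^ t ≤ (Fintype.card (Fin K)).descFactorial t := by
      calc (23 * t) ^ t ≤ (Fintype.card (Fin K) + 1 - t) ^ t := by
            apply Nat.pow_le_pow_left
            rw [hcardK]
            omega
        _ ≤ _ := Nat.pow_sub_le_descFactorial _ _
    have hWr : (W.card : ℝ) < (6 / 5 : ℝ) ^ t := by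
      have h1 : W.card ≤ Tfin.card := Finset.card_filter_le _ _
      have h2 : Tfin.card = T.ncard := (Set.ncard_eq_toFinset_card _ hTfin).symm
      have h3 : ((n : ℝ) / 16) = ((t : ℕ) : ℝ) := by
        rw [hn16]; push_cast; ring
      rw [h3, Real.rpow_natCast] at hcon
      calc (W.card : ℝ) ≤ (T.ncard : ℝ) := by exact_mod_cast h2 ▸ Nat.cast_le.mpr h1
        _ < (6 / 5 : ℝ) ^ t - 1 := hcon
        _ ≤ (6 / 5 : ℝ) ^ t := by linarith
    have hWnat : W.card * (18 * t) ^ t < (23 * t) ^ t := by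
      have hreal : (W.card : ℝ) * ((18 * t : ℕ) : ℝ) ^ t < ((23 * t : ℕ) : ℝ) ^ t := by
        push_cast
        have htR : (0 : ℝ) < (t : ℝ) := by exact_mod_cast (by omega : 0 < t)
        calc (W.card : ℝ) * (18 * (t : ℝ)) ^ t
            < (6 / 5 : ℝ) ^ t * (18 * (t : ℝ)) ^ t := by
              apply mul_lt_mul_of_pos_right hWr
              positivity
          _ = ((6 / 5 : ℝ) * (18 * (t : ℝ))) ^ t := (mul_pow _ _ _).symm
          _ ≤ (23 * (t : ℝ)) ^ t := by
              apply pow_le_pow_left₀ (by nlinarith) (by nlinarith)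
      exact_mod_cast hreal
    have hfinal : (Fintype.card (Fin K)).factorial
          * (Fintype.card (Fin K)).descFactorial t
        < (Fintype.card (Fin K)).factorial
          * (Fintype.card (Fin K)).descFactorial t := by
      calc (Fintype.card (Fin K)).factorial * (Fintype.card (Fin K)).descFactorial t
          ≤ W.card * ((Fintype.card (Fin K)).factorial * (18 * t) ^ t) := hchain
        _ = (Fintype.card (Fin K)).factorial * (W.card * (18 * t) ^ t) := by ring
        _ < (Fintype.card (Fin K)).factorial * (23 * t) ^ t :=
            (Nat.mul_lt_mul_left (Nat.factorial_pos _)).mpr hWnat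
        _ ≤ _ := Nat.mul_le_mul_left _ hdescF
    exact absurd hfinal (lt_irrefl _)
  obtain ⟨π, hπ⟩ := hgood
  -- lower bound on free holes
  have hFc : t + 2 ≤ Fc (Ed π) := by
    have hpart : (Finset.univ.filter
          (fun h : Fin n => ∀ p, (Ed π).matched p = true → (Ed π).hole p ≠ h)).card
        + (Finset.univ.filter
          (fun h : Fin n =>
            ¬ ∀ p, (Ed π).matched p = true → (Ed π).hole p ≠ h)).card
        = n := by
      rw [Finset.card_filter_add_card_filter_not, Finset.card_univ,
        Fintype.card_fin]
    have hcompl : (Finset.univ.filter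
          (fun h : Fin n =>
            ¬ ∀ p, (Ed π).matched p = true → (Ed π).hole p ≠ h)).card ≤ M := by
      calc _ ≤ ((Finset.univ.filter
            (fun p : Fin (n + 1) => (Ed π).matched p = true)).image
            (Ed π).hole).card := by
            apply Finset.card_le_card
            intro h hh
            rw [Finset.mem_filter] at hh
            have hh2 := hh.2
            push_neg at hh2
            obtain ⟨p, hp1, hp2⟩ := hh2
            rw [Finset.mem_image]
            exact ⟨p, Finset.mem_filter.mpr ⟨Finset.mem_univ _, hp1⟩, hp2⟩
        _ ≤ (Finset.univ.filter
            (fun p : Fin (n + 1) => (Ed π).matched p = true)).card :=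
            Finset.card_image_le
        _ ≤ (Finset.univ.filter (fun hh : Fin K => (hh : ℕ) < M)).card := by
            apply Finset.card_le_card_of_injOn (fun p => π (pe p))
            · intro p hp
              rw [Finset.mem_coe, Finset.mem_filter] at hp ⊢
              exact ⟨Finset.mem_univ _, (hEd_matched π p).mp hp.2⟩
            · intro p _ p' _ h
              exact hpeinj (π.injective h)
        _ = M := card_filter_lt K M (by omega)
    have hfc : Fc (Ed π) = (Finset.univ.filter
        (fun h : Fin n => ∀ p, (Ed π).matched p = true → (Ed π).hole p ≠ h)).card := rfl
    omega
  -- narrowness of consistent terms of T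
  have hnarrow : ∀ D ∈ T, consE (Ed π) D → (UM (Ed π) D).card < t := by
    intro D hD hcons
    by_cases hw : t ≤ (mf D).card
    · exact absurd hcons (hπ D (hTfin.mem_toFinset.mpr hD) hw)
    · push_neg at hw
      have hsub := hUMsub π D
      have := Finset.card_le_card hsub
      omega
  -- build the satisfying valuation
  apply hinfeas
  refine ⟨val (Ed π) r, ?_⟩
  intro c hc
  have hterms : SACon.termsOf c ⊆ T := fun x hx => Set.mem_biUnion hc hx
  rcases c with _ | ⟨D, x⟩ | ⟨D, x, b⟩ | ⟨D, C⟩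
  · exact holds_top (Ed π) r
  · intro hx
    have hD : D ∈ T := hterms (Set.mem_insert _ _)
    exact holds_negation (Ed π) hFc D x (hnarrow D hD) hx
  · have hD : D ∈ T := hterms (Set.mem_insert _ _)
    exact holds_bound (Ed π) hFc D x b (hnarrow D hD)
  · intro hC
    obtain ⟨i, i', a, hii, rfl⟩ := hC
    have hD : D ∈ T := hterms (Set.mem_insert _ _)
    have hmain := holds_clause (Ed π) hFc hn2 D i i' hii a (hnarrow D hD)
    show val (Ed π) r D ≤ _
    rw [List.map_append, List.sum_append]
    have hconv : ∀ j : Fin (n + 1),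
        (((holeClause (n + 1) r j a.val).map
          (fun l => evalLit (val (Ed π) r) D l.1 l.2)).sum : ℝ)
        = ∑ k : Fin r, evalLit (val (Ed π) r) D (j, k) (!(Nat.testBit (a : ℕ) k.val)) := by
      intro j
      rw [holeClause, List.map_map, Fin.sum_univ_def]
      rfl
    rw [hconv i, hconv i']
    exact hmain
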